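/- Let H be a d-uniform hypergraph such that any two distinct edges E, E' with E ∩ E' ≠ ∅ satisfy |E ∩ E'| = d − 1. Then the induced matching number equals the semi induced matching number: c_H = c'_H. More precisely, for every semi induced matching {E_1,…,E_k} of H there exists a subset S ⊆ {1,…,k} such that {E_ℓ : ℓ ∈ S} is an induced matching and |⋃_{ℓ=1}^k E_ℓ| − k ≤ |⋃_{ℓ∈S} E_ℓ| − |S|. -/

import Mathlib

/-- A finite set `M` of edges of a hypergraph with edge set `Es` is a *semi induced
matching* if `M ⊆ Es` and the only edges of `Es` contained in `⋃ M` are the members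
of `M`. -/
def SemiInducedMatching {α : Type*} [DecidableEq α]
    (Es : Set (Finset α)) (M : Finset (Finset α)) : Prop :=
  ↑M ⊆ Es ∧ ∀ e ∈ Es, e ⊆ M.sup id → e ∈ M

/-- An *induced matching* is a semi induced matching whose edges are pairwise disjoint. -/
def InducedMatching {α : Type*} [DecidableEq α]
    (Es : Set (Finset α)) (M : Finset (Finset α)) : Prop :=
  SemiInducedMatching Es M ∧ (M : Set (Finset α)).Pairwise Disjoint

/-- The induced matching number `c_H = max { |⋃ M| - |M| : M induced matching }`. -/
noncomputable def cInd {α : Type*} [DecidableEq α] (Es : Set (Finset α)) : ℕ :=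
  sSup {n : ℕ | ∃ M : Finset (Finset α),
    InducedMatching Es M ∧ n = (M.sup id).card - M.card}

/-- The semi induced matching number `c'_H`. -/
noncomputable def cSemi {α : Type*} [DecidableEq α] (Es : Set (Finset α)) : ℕ :=
  sSup {n : ℕ | ∃ M : Finset (Finset α),
    SemiInducedMatching Es M ∧ n = (M.sup id).card - M.card}


open Finset in
theorem key_aux {α : Type*} [DecidableEq α]
    (d : ℕ) (E : Finset (Finset α))
    (hne : ∀ e ∈ E, e ≠ ∅)
    (hsimple : ∀ e ∈ E, ∀ e' ∈ E, e ⊆ e' → e = e')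
    (huniform : ∀ e ∈ E, e.card = d)
    (hint : ∀ e ∈ E, ∀ e' ∈ E, e ≠ e' → (e ∩ e').Nonempty → (e ∩ e').card = d - 1)
    (M : Finset (Finset α)) (hME : M ⊆ E) :
    ∃ S ⊆ M, ((S : Set (Finset α)).Pairwise Disjoint) ∧
        (∀ e ∈ M, e ⊆ S.sup id → e ∈ S) ∧
        (M.sup id).card + S.card ≤ (S.sup id).card + M.card ∧
        S.card ≤ (S.sup id).card := by
  classical
  induction M using Finset.strongInduction with
  | _ M ih =>
  rcases M.eq_empty_or_nonempty with rfl | ⟨e₀, he₀⟩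
  · exact ⟨∅, Finset.Subset.refl _, by simp, by simp, by simp, by simp⟩
  · have he₀E : e₀ ∈ E := hME he₀
    have hd : 1 ≤ d := by
      have := huniform e₀ he₀E
      have h2 : e₀.Nonempty := Finset.nonempty_iff_ne_empty.mpr (hne e₀ he₀E)
      have := Finset.card_pos.mpr h2
      omega
    set r : Finset α → Finset α → Prop :=
      fun a b => a ∈ M ∧ b ∈ M ∧ (a ∩ b).Nonempty with hr
    set C : Finset (Finset α) := M.filter (fun e => Relation.ReflTransGen r e₀ e) with hC
    have hCM : C ⊆ M := Finset.filter_subset _ _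
    have hreach_mem : ∀ e, Relation.ReflTransGen r e₀ e → e ∈ M := by
      intro e h
      induction h with
      | refl => exact he₀
      | tail _ hbc _ => exact hbc.2.1
    have Cmem : ∀ e, e ∈ C ↔ Relation.ReflTransGen r e₀ e := by
      intro e
      simp only [hC, Finset.mem_filter]
      exact ⟨fun h => h.2, fun h => ⟨hreach_mem e h, h⟩⟩
    have he₀C : e₀ ∈ C := (Cmem e₀).mpr Relation.ReflTransGen.refl
    have hdisjCM : ∀ e ∈ M, e ∉ C → ∀ f ∈ C, Disjoint e f := by
      intro e heM heC f hfC
      by_contra hcon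
      obtain ⟨v, hv⟩ := Finset.not_disjoint_iff_nonempty_inter.mp hcon
      have hrfe : r f e := ⟨hCM hfC, heM, ⟨v, by
        rw [Finset.mem_inter] at hv ⊢; exact ⟨hv.2, hv.1⟩⟩⟩
      exact heC ((Cmem e).mpr (((Cmem f).mp hfC).tail hrfe))
    -- find lemma
    have find : ∀ T : Finset (Finset α), e₀ ∈ T →
        ∀ g, Relation.ReflTransGen r e₀ g → g ∉ T →
        ∃ e ∈ C, e ∉ T ∧ ∃ f ∈ T, (e ∩ f).Nonempty := by
      intro T he₀T g hg
      induction hg with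
      | refl => intro h; exact absurd he₀T h
      | @tail b c hab hbc ihb =>
        intro hcT
        by_cases hbT : b ∈ T
        · refine ⟨c, (Cmem c).mpr (hab.tail hbc), hcT, b, hbT, ?_⟩
          obtain ⟨v, hv⟩ := hbc.2.2
          rw [Finset.mem_inter] at hv
          exact ⟨v, Finset.mem_inter.mpr ⟨hv.2, hv.1⟩⟩
        · exact ihb hbT
    -- grow lemma
    have grow : ∀ n (T : Finset (Finset α)), T ⊆ C → e₀ ∈ T → (C \ T).card = n →
        (C.sup id).card ≤ (T.sup id).card + n := by
      intro n
      induction n with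
      | zero =>
        intro T hTC he₀T hcard
        have hCT : C = T :=
          Finset.Subset.antisymm
            (by
              intro x hx
              by_contra hxT
              have : x ∈ C \ T := Finset.mem_sdiff.mpr ⟨hx, hxT⟩
              have := Finset.card_pos.mpr ⟨x, this⟩
              omega) hTC
        rw [hCT]; omega
      | succ n ihn =>
        intro T hTC he₀T hcard
        have : (C \ T).Nonempty := Finset.card_pos.mp (by omega)
        obtain ⟨g, hg⟩ := this
        rw [Finset.mem_sdiff] at hg
        obtain ⟨e, heC, heT, f, hfT, hef⟩ := find T he₀T g ((Cmem g).mp hg.1) hg.2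
        have heE : e ∈ E := hME (hCM heC)
        have hfE : f ∈ E := hME (hCM (hTC hfT))
        have hefcard : (e \ f).card ≤ 1 := by
          by_cases hef' : e = f
          · subst hef'; simp
          · have h1 : (e ∩ f).card = d - 1 := hint e heE f hfE hef' hef
            have h2 : e.card = d := huniform e heE
            have h3 : e \ f = e \ (e ∩ f) := (Finset.sdiff_inter_self_left e f).symm
            have h4 : (e \ (e ∩ f)).card = e.card - (e ∩ f).card :=
              Finset.card_sdiff_of_subset Finset.inter_subset_left
            rw [h3, h4]
            omega
        have hTsup : ((insert e T).sup id) = e ∪ T.sup id := by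
          rw [Finset.sup_insert]; rfl
        have hb : ((insert e T).sup id).card ≤ (T.sup id).card + 1 := by
          rw [hTsup]
          have h5 : e ∪ T.sup id = T.sup id ∪ e \ T.sup id := by
            rw [Finset.union_sdiff_self_eq_union, Finset.union_comm]
          rw [h5, Finset.card_union_of_disjoint Finset.disjoint_sdiff]
          have h6 : e \ T.sup id ⊆ e \ f :=
            Finset.sdiff_subset_sdiff (Finset.Subset.refl e) (Finset.le_sup (f := id) hfT)
          have := Finset.card_le_card h6
          omega
        have hcard' : (C \ insert e T).card = n := by
          rw [Finset.sdiff_insert, Finset.card_erase_of_mem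
            (Finset.mem_sdiff.mpr ⟨heC, heT⟩), hcard]
          omega
        have hrec := ihn (insert e T) (Finset.insert_subset heC hTC)
          (Finset.mem_insert_of_mem he₀T) hcard'
        omega
    have hCbound : (C.sup id).card + 1 ≤ d + C.card := by
      have h1 := grow ((C \ {e₀}).card) {e₀} (Finset.singleton_subset_iff.mpr he₀C)
        (Finset.mem_singleton_self e₀) rfl
      have h2 : ({e₀} : Finset (Finset α)).sup id = e₀ := Finset.sup_singleton
      have h3 : (C \ {e₀}).card = C.card - 1 := by
        rw [Finset.card_sdiff_of_subset (Finset.singleton_subset_iff.mpr he₀C), Finset.card_singleton]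
      have h4 : 1 ≤ C.card := Finset.card_pos.mpr ⟨e₀, he₀C⟩
      rw [h2, h3] at h1
      have h5 : e₀.card = d := huniform e₀ he₀E
      omega
    -- apply IH to M \ C
    have hssub : M \ C ⊂ M := Finset.sdiff_ssubset hCM ⟨e₀, he₀C⟩
    obtain ⟨S', hS'sub, hpw', hind', hcount', hcard'⟩ :=
      ih (M \ C) hssub (Finset.Subset.trans Finset.sdiff_subset hME)
    have he₀S' : e₀ ∉ S' := fun h => (Finset.mem_sdiff.mp (hS'sub h)).2 he₀C
    have hdisj₀ : ∀ s ∈ S', Disjoint e₀ s := by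
      intro s hs
      have hsMC := Finset.mem_sdiff.mp (hS'sub hs)
      exact (hdisjCM s hsMC.1 hsMC.2 e₀ he₀C).symm
    have hsupdisj : Disjoint (C.sup id) ((M \ C).sup id) := by
      rw [Finset.disjoint_sup_left]
      intro f hf
      rw [Finset.disjoint_sup_right]
      intro e he
      have heMC := Finset.mem_sdiff.mp he
      exact (hdisjCM e heMC.1 heMC.2 f hf).symm
    have hMsup : M.sup id = C.sup id ∪ (M \ C).sup id := by
      conv_lhs => rw [← Finset.union_sdiff_of_subset hCM]
      rw [Finset.sup_union]; rfl
    have hMsupcard : (M.sup id).card = (C.sup id).card + ((M \ C).sup id).card := by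
      rw [hMsup, Finset.card_union_of_disjoint hsupdisj]
    have hMcard : M.card = C.card + (M \ C).card := by
      have := Finset.card_sdiff_add_card_eq_card hCM
      omega
    refine ⟨insert e₀ S', ?_, ?_, ?_, ?_, ?_⟩
    · exact Finset.insert_subset he₀ (Finset.Subset.trans hS'sub Finset.sdiff_subset)
    · rw [Finset.coe_insert]
      refine Set.pairwise_insert_of_symmetric.mpr ⟨hpw', ?_⟩
      intro s hs _
      exact hdisj₀ s hs
    · -- induced property
      intro e heM hesub
      have hSsup : (insert e₀ S').sup id = e₀ ∪ S'.sup id := by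
        rw [Finset.sup_insert]; rfl
      rw [hSsup] at hesub
      have hS'supsub : S'.sup id ⊆ (M \ C).sup id := Finset.sup_mono hS'sub
      by_cases heC : e ∈ C
      · have hesupC : e ⊆ C.sup id := Finset.le_sup (f := id) heC
        have hedisj : Disjoint e (S'.sup id) :=
          Finset.disjoint_of_subset_left hesupC
            (Finset.disjoint_of_subset_right hS'supsub hsupdisj)
        have hee₀ : e ⊆ e₀ := by
          intro v hv
          rcases Finset.mem_union.mp (hesub hv) with h | h
          · exact h
          · exact absurd h (Finset.disjoint_left.mp hedisj hv)
        have : e = e₀ := hsimple e (hME heM) e₀ he₀E hee₀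
        rw [this]; exact Finset.mem_insert_self _ _
      · have hedisj : Disjoint e e₀ := hdisjCM e heM heC e₀ he₀C
        have heS' : e ⊆ S'.sup id := by
          intro v hv
          rcases Finset.mem_union.mp (hesub hv) with h | h
          · exact absurd h (Finset.disjoint_left.mp hedisj hv)
          · exact h
        exact Finset.mem_insert_of_mem
          (hind' e (Finset.mem_sdiff.mpr ⟨heM, heC⟩) heS')
    · -- counting
      have hSsup : (insert e₀ S').sup id = e₀ ∪ S'.sup id := by
        rw [Finset.sup_insert]; rfl
      have hdisjS' : Disjoint e₀ (S'.sup id) := by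
        rw [Finset.disjoint_sup_right]; exact hdisj₀
      have hSsupcard : ((insert e₀ S').sup id).card = d + (S'.sup id).card := by
        rw [hSsup, Finset.card_union_of_disjoint hdisjS', huniform e₀ he₀E]
      have hScard : (insert e₀ S').card = S'.card + 1 :=
        Finset.card_insert_of_notMem he₀S'
      omega
    · have hSsup : (insert e₀ S').sup id = e₀ ∪ S'.sup id := by
        rw [Finset.sup_insert]; rfl
      have hdisjS' : Disjoint e₀ (S'.sup id) := by
        rw [Finset.disjoint_sup_right]; exact hdisj₀
      have hSsupcard : ((insert e₀ S').sup id).card = d + (S'.sup id).card := by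
        rw [hSsup, Finset.card_union_of_disjoint hdisjS', huniform e₀ he₀E]
      have hScard : (insert e₀ S').card = S'.card + 1 :=
        Finset.card_insert_of_notMem he₀S'
      omega


/-- If `H` is a `d`-uniform hypergraph in which any two distinct
intersecting edges meet in exactly `d - 1` vertices, then `c_H = c'_H`; more
precisely, every semi induced matching `M` contains a subset `S` which is an
induced matching with `|⋃ M| - |M| ≤ |⋃ S| - |S|`. -/
theorem cInd_eq_cSemi_of_uniform {α : Type*} [DecidableEq α]
    (d : ℕ) (E : Finset (Finset α))
    (hne : ∀ e ∈ E, e ≠ ∅)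
    (hsimple : ∀ e ∈ E, ∀ e' ∈ E, e ⊆ e' → e = e')
    (huniform : ∀ e ∈ E, e.card = d)
    (hint : ∀ e ∈ E, ∀ e' ∈ E, e ≠ e' → (e ∩ e').Nonempty → (e ∩ e').card = d - 1) :
    cInd (α := α) ↑E = cSemi (α := α) ↑E ∧
      ∀ M : Finset (Finset α), SemiInducedMatching (↑E) M →
        ∃ S ⊆ M, InducedMatching (↑E) S ∧
          (M.sup id).card - M.card ≤ (S.sup id).card - S.card := by
  classical
  have key : ∀ M : Finset (Finset α), SemiInducedMatching (↑E) M →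
      ∃ S ⊆ M, InducedMatching (↑E) S ∧
        (M.sup id).card - M.card ≤ (S.sup id).card - S.card := by
    intro M hM
    have hME : M ⊆ E := by
      intro e he
      exact_mod_cast hM.1 (Finset.mem_coe.mpr he)
    obtain ⟨S, hSM, hpw, hind, hcount, hcard⟩ :=
      key_aux d E hne hsimple huniform hint M hME
    refine ⟨S, hSM, ⟨⟨?_, ?_⟩, hpw⟩, by omega⟩
    · intro e he
      exact hM.1 (Finset.mem_coe.mpr (hSM (Finset.mem_coe.mp he)))
    · intro e heE hesub
      have heM : e ∈ M := hM.2 e heE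
        (Finset.Subset.trans hesub (Finset.sup_mono hSM))
      exact hind e heM hesub
  refine ⟨?_, key⟩
  -- both sets nonempty (contain 0) and bounded above
  have hempty : SemiInducedMatching (↑E : Set (Finset α)) ∅ := by
    constructor
    · simp
    · intro e heE hsub
      simp only [Finset.sup_empty] at hsub
      have : e = ∅ := Finset.subset_empty.mp hsub
      exact absurd this (hne e (by exact_mod_cast heE))
  have h0ind : 0 ∈ {n : ℕ | ∃ M : Finset (Finset α),
      InducedMatching (↑E : Set (Finset α)) M ∧ n = (M.sup id).card - M.card} :=
    ⟨∅, ⟨hempty, by simp⟩, by simp⟩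
  have hbdd : ∀ M : Finset (Finset α), M ⊆ E →
      (M.sup id).card - M.card ≤ (E.sup id).card := by
    intro M hME
    have := Finset.card_le_card (Finset.sup_mono hME (f := id))
    omega
  have hbddInd : BddAbove {n : ℕ | ∃ M : Finset (Finset α),
      InducedMatching (↑E : Set (Finset α)) M ∧ n = (M.sup id).card - M.card} := by
    refine ⟨(E.sup id).card, fun n hn => ?_⟩
    obtain ⟨M, hM, rfl⟩ := hn
    exact hbdd M (fun e he => by exact_mod_cast hM.1.1 (Finset.mem_coe.mpr he))
  have hbddSemi : BddAbove {n : ℕ | ∃ M : Finset (Finset α),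
      SemiInducedMatching (↑E : Set (Finset α)) M ∧ n = (M.sup id).card - M.card} := by
    refine ⟨(E.sup id).card, fun n hn => ?_⟩
    obtain ⟨M, hM, rfl⟩ := hn
    exact hbdd M (fun e he => by exact_mod_cast hM.1 (Finset.mem_coe.mpr he))
  unfold cInd cSemi
  apply le_antisymm
  · -- cInd ≤ cSemi
    refine csSup_le_csSup hbddSemi ⟨0, h0ind⟩ ?_
    rintro n ⟨M, hM, rfl⟩
    exact ⟨M, hM.1, rfl⟩
  · -- cSemi ≤ cInd
    refine csSup_le ⟨0, ⟨∅, hempty, by simp⟩⟩ ?_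
    rintro n ⟨M, hM, rfl⟩
    obtain ⟨S, hSM, hSind, hle⟩ := key M hM
    exact le_trans hle (le_csSup hbddInd ⟨S, hSind, rfl⟩)
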